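/- Let A : L²(0,1) → L²(0,1) be the Volterra integration operator defined by (Ax)(s) = ∫₀^s x(t) dt for s ∈ [0,1]. Then for every x ∈ L²(0,1) one has ⟨Ax, x⟩ = (1/2)(∫₀¹ x(t) dt)². Consequently, A is accretive (⟨Ax, x⟩ ≥ 0 for all x), and for the constant function x† ≡ 1 the Lavrentiev-type variational source condition ⟨x†, x⟩ ≤ √2 · ⟨Ax, x⟩^{1/2} holds for all x ∈ L²(0,1). -/

import Mathlib

open MeasureTheory RealInnerProductSpace

/-- For the Volterra integration operator A on L²(0,1), one has
⟨Ax, x⟩ = ½(∫₀¹ x)², hence A is accretive, and the constant function x† ≡ 1 satisfies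
the Lavrentiev-type variational source condition ⟨x†, x⟩ ≤ √2 ⟨Ax, x⟩^{1/2}. -/
theorem stmt_19
    (μ : Measure ℝ) (hμ : μ = volume.restrict (Set.Ioc (0:ℝ) 1))
    (A : Lp ℝ 2 μ →L[ℝ] Lp ℝ 2 μ)
    (hA : ∀ x : Lp ℝ 2 μ, ∀ᵐ s ∂μ,
      (A x : ℝ → ℝ) s = ∫ t in Set.Ioc (0:ℝ) s, (x : ℝ → ℝ) t ∂μ)
    (xdag : Lp ℝ 2 μ) (hxdag : (xdag : ℝ → ℝ) =ᵐ[μ] fun _ => 1) :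
    (∀ x : Lp ℝ 2 μ, ⟪A x, x⟫ = (1 / 2) * (∫ t, (x : ℝ → ℝ) t ∂μ) ^ 2) ∧
    (∀ x : Lp ℝ 2 μ, 0 ≤ ⟪A x, x⟫) ∧
    (∀ x : Lp ℝ 2 μ, ⟪xdag, x⟫ ≤ Real.sqrt 2 * Real.sqrt ⟪A x, x⟫) := by
  haveI : IsFiniteMeasure μ := by
    constructor
    rw [hμ, Measure.restrict_apply_univ]
    simp [Real.volume_Ioc]
  have hsing : ∀ a : ℝ, μ {a} = 0 := by
    intro a
    rw [hμ]
    exact le_antisymm (le_trans (Measure.restrict_apply_le _ _) (by simp)) zero_le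
  -- the key identity
  have key : ∀ x : Lp ℝ 2 μ, ⟪A x, x⟫ = (1 / 2) * (∫ t, (x : ℝ → ℝ) t ∂μ) ^ 2 := by
    intro x
    set f : ℝ → ℝ := (x : ℝ → ℝ) with hf_def
    have hf : Integrable f μ := (Lp.memLp x).integrable one_le_two
    have hAf : Integrable ((A x : ℝ → ℝ)) μ := (Lp.memLp (A x)).integrable one_le_two
    set I : ℝ := ∫ t, f t ∂μ with hI_def
    set T : Set (ℝ × ℝ) := {p : ℝ × ℝ | p.2 ≤ p.1} with hT_def
    set S : Set (ℝ × ℝ) := {p : ℝ × ℝ | p.1 ≤ p.2} with hS_def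
    have hT : MeasurableSet T := measurableSet_le measurable_snd measurable_fst
    have hS : MeasurableSet S := measurableSet_le measurable_fst measurable_snd
    have hprod : Integrable (fun p : ℝ × ℝ => f p.1 * f p.2) (μ.prod μ) := hf.mul_prod hf
    set g : ℝ × ℝ → ℝ := T.indicator (fun p => f p.1 * f p.2) with hg_def
    set gS : ℝ × ℝ → ℝ := S.indicator (fun p => f p.1 * f p.2) with hgS_def
    have hg : Integrable g (μ.prod μ) := hprod.indicator hT
    have hgS : Integrable gS (μ.prod μ) := hprod.indicator hS
    -- the same restriction
    have hrestrict : ∀ s : ℝ, μ.restrict (Set.Ioc (0:ℝ) s) = μ.restrict (Set.Iic s) := by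
      intro s
      rw [hμ, Measure.restrict_restrict measurableSet_Ioc,
        Measure.restrict_restrict measurableSet_Iic]
      congr 1
      ext t
      simp only [Set.mem_inter_iff, Set.mem_Ioc, Set.mem_Iic]
      tauto
    -- step 1: inner product as double integral over T
    have step1 : ⟪A x, x⟫ = ∫ z, g z ∂(μ.prod μ) := by
      rw [L2.inner_def, MeasureTheory.integral_prod g hg]
      have : ∀ p : ℝ, (∫ y, g (p, y) ∂μ) = f p * ∫ t in Set.Iic p, f t ∂μ := by
        intro p
        have : (fun y => g (p, y)) = (Set.Iic p).indicator (fun y => f p * f y) := by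
          funext y
          by_cases h : y ≤ p <;>
            simp [hg_def, hT_def, Set.indicator, h]
        rw [this, MeasureTheory.integral_indicator measurableSet_Iic,
          integral_const_mul]
      simp only [this]
      refine integral_congr_ae ?_
      filter_upwards [hA x] with s hs
      rw [RCLike.inner_apply, RCLike.conj_to_real, hs, hrestrict s, mul_comm]
    -- step 2: symmetry
    have step2 : ∫ z, gS z ∂(μ.prod μ) = ∫ z, g z ∂(μ.prod μ) := by
      have hmap : ∫ z, gS z ∂(μ.prod μ) = ∫ z, gS (Prod.swap z) ∂(μ.prod μ) := by
        conv_lhs => rw [← Measure.prod_swap]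
        exact MeasureTheory.integral_map measurable_swap.aemeasurable
          (by rw [Measure.prod_swap]; exact hgS.aestronglyMeasurable)
      rw [hmap]
      refine integral_congr_ae (Filter.Eventually.of_forall fun p => ?_)
      by_cases h : p.2 ≤ p.1 <;>
        simp [hg_def, hgS_def, hS_def, hT_def, Set.indicator, h, mul_comm]
    -- step 3: diagonal is null
    have hdiag : (μ.prod μ) {p : ℝ × ℝ | p.1 = p.2} = 0 := by
      have hDm : MeasurableSet {p : ℝ × ℝ | p.1 = p.2} :=
        measurableSet_eq_fun measurable_fst measurable_snd
      rw [Measure.prod_apply hDm]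
      have : ∀ a : ℝ, μ (Prod.mk a ⁻¹' {p : ℝ × ℝ | p.1 = p.2}) = 0 := by
        intro a
        have : (Prod.mk a ⁻¹' {p : ℝ × ℝ | p.1 = p.2}) = {a} := by
          ext y; simp [eq_comm]
        rw [this, hsing]
      simp [hsing]
    -- step 4: sum identity
    have hTS : ∀ p : ℝ × ℝ, g p + gS p =
        f p.1 * f p.2 + ({p : ℝ × ℝ | p.1 = p.2}).indicator (fun p => f p.1 * f p.2) p := by
      intro p
      rcases lt_trichotomy p.1 p.2 with h | h | h
      · simp [hg_def, hgS_def, hS_def, hT_def, Set.indicator, not_le.mpr h, h.le, h.ne]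
      · simp [hg_def, hgS_def, hS_def, hT_def, Set.indicator, h.le, h.ge, h]
      · simp [hg_def, hgS_def, hS_def, hT_def, Set.indicator, not_le.mpr h, h.le, h.ne']
    have step4 : (∫ z, g z ∂(μ.prod μ)) + (∫ z, gS z ∂(μ.prod μ)) = I * I := by
      rw [← integral_add hg hgS]
      calc ∫ z, (g z + gS z) ∂(μ.prod μ)
          = ∫ z, (f z.1 * f z.2 +
              ({p : ℝ × ℝ | p.1 = p.2}).indicator (fun p => f p.1 * f p.2) z) ∂(μ.prod μ) := by
            exact integral_congr_ae (Filter.Eventually.of_forall hTS)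
        _ = (∫ z : ℝ × ℝ, f z.1 * f z.2 ∂(μ.prod μ)) +
              ∫ z in {p : ℝ × ℝ | p.1 = p.2}, f z.1 * f z.2 ∂(μ.prod μ) := by
            rw [← MeasureTheory.integral_indicator
              (measurableSet_eq_fun measurable_fst measurable_snd)]
            exact integral_add hprod (hprod.indicator
              (measurableSet_eq_fun measurable_fst measurable_snd))
        _ = I * I := by
            rw [MeasureTheory.integral_prod_mul f f,
              Measure.restrict_eq_zero.mpr hdiag]
            simp [hI_def]
    rw [step1]
    rw [step2] at step4
    nlinarith [step4]
  refine ⟨key, fun x => by rw [key x]; positivity, fun x => ?_⟩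
  have hxd : ⟪xdag, x⟫ = ∫ t, (x : ℝ → ℝ) t ∂μ := by
    rw [L2.inner_def]
    refine integral_congr_ae ?_
    filter_upwards [hxdag] with t ht
    rw [RCLike.inner_apply, RCLike.conj_to_real, ht]
    ring
  rw [hxd, key x]
  set I : ℝ := ∫ t, (x : ℝ → ℝ) t ∂μ
  rw [← Real.sqrt_mul (by norm_num : (2:ℝ) ≥ 0)]
  have : (2:ℝ) * (1 / 2 * I ^ 2) = I ^ 2 := by ring
  rw [this, Real.sqrt_sq_eq_abs]
  exact le_abs_self I
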